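/- For the marginally trapped meridian surface with f(u) = u and ġ(u) = (±a·u + c)/√((±a·u+c)² + u²), the curvature of the meridian curve m: u ↦ (u, g(u)) equals κ_m(u) = −c/u² for u > 0. -/

import Mathlib

/-- For the marginally trapped meridian surface M′_m with f(u) = u and
ġ(u) = (±au + c)/√((±au+c)² + u²), the curvature κ_m = g̈/(1 − ġ²)^{3/2} of the meridian
m : u ↦ (u, g(u)) equals −c/u² for u > 0. -/
theorem stmt_10 (a c s : ℝ) (hs : s = 1 ∨ s = -1) (gdot : ℝ → ℝ)
    (hgdot : ∀ u : ℝ, gdot u =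
      (s * a * u + c) / Real.sqrt ((s * a * u + c) ^ 2 + u ^ 2))
    (κm : ℝ → ℝ)
    (hκm : ∀ u : ℝ, 0 < u →
      κm u = deriv gdot u / (1 - gdot u ^ 2) ^ ((3 : ℝ) / 2)) :
    ∀ u : ℝ, 0 < u → κm u = -c / u ^ 2 := by
  intro u hu
  rw [hκm u hu]
  set P : ℝ := s * a * u + c with hP
  set Q : ℝ := P ^ 2 + u ^ 2 with hQdef
  have hQ : (0:ℝ) < Q := by positivity
  have hQne : Q ≠ 0 := ne_of_gt hQ
  have hsq : 0 < Real.sqrt Q := Real.sqrt_pos.mpr hQ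
  have hs2 : Real.sqrt Q ^ 2 = Q := Real.sq_sqrt hQ.le
  have hfun : gdot = fun x => (s*a*x+c)/Real.sqrt ((s*a*x+c)^2+x^2) := funext hgdot
  have hN : HasDerivAt (fun x : ℝ => s*a*x+c) (s*a) u := by
    simpa using ((hasDerivAt_id u).const_mul (s*a)).add_const c
  have hQ' : HasDerivAt (fun x : ℝ => (s*a*x+c)^2+x^2) (2*P*(s*a)+2*u) u := by
    have h1 := (hN.pow 2).add (hasDerivAt_pow 2 u)
    refine h1.congr_deriv ?_
    push_cast
    rw [hP]; ring
  have hsqrt : HasDerivAt (fun x : ℝ => Real.sqrt ((s*a*x+c)^2+x^2))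
      ((2*P*(s*a)+2*u) / (2*Real.sqrt Q)) u := by
    have h := (Real.hasDerivAt_sqrt hQne).comp u hQ'
    refine h.congr_deriv ?_
    · ring
  have hdiv : HasDerivAt gdot
      ((s*a*Real.sqrt Q - P*((2*P*(s*a)+2*u)/(2*Real.sqrt Q)))/(Real.sqrt Q)^2) u := by
    rw [hfun]
    exact hN.div hsqrt (ne_of_gt hsq)
  have hnum : s*a*Real.sqrt Q - P*((2*P*(s*a)+2*u)/(2*Real.sqrt Q))
      = -c*u/Real.sqrt Q := by
    rw [eq_div_iff (ne_of_gt hsq)]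
    field_simp
    linear_combination (s*a) * hs2 + (s*a) * hQdef - u * hP
  have hderiv : deriv gdot u = -c * u / (Real.sqrt Q)^3 := by
    rw [hdiv.deriv, hnum]
    rw [div_div, ← pow_succ']

  have hgsq : 1 - gdot u ^ 2 = (u / Real.sqrt Q) ^ 2 := by
    rw [hgdot u, ← hP, ← hQdef, div_pow, div_pow, hs2, hQdef]
    field_simp
    ring
  have hxpos : 0 < u / Real.sqrt Q := div_pos hu hsq
  have hpow : (1 - gdot u ^ 2) ^ ((3:ℝ)/2) = (u / Real.sqrt Q) ^ 3 := by
    rw [hgsq, ← Real.rpow_natCast (u / Real.sqrt Q) 2, ← Real.rpow_mul hxpos.le,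
      show ((2:ℕ):ℝ) * ((3:ℝ)/2) = ((3:ℕ):ℝ) by norm_num, Real.rpow_natCast]
  rw [hderiv, hpow]
  rw [div_pow]
  field_simp
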